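/- Let (G,[·,...,·]) be a higher-order Lie algebra of even order n with G = V_0 ⊕ V_1 as vector spaces. If [V_1, V_0, ..., V_0] ⊆ V_1 (one argument from V_1 and n−1 from V_0), then the composition π_0 ∘ [·,...,·] restricted to V_0 (where π_0 : G → V_0 is the projection along V_1) defines an alternating n-bracket on V_0 satisfying the generalized Jacobi identity; i.e., V_0 with the projected bracket is a higher-order Lie algebra (the reduced multialgebra). -/

import Mathlib

/-- Generalized Jacobi identity for an alternating (m+1)-bracket. -/
def GJI {K G : Type*} [CommRing K] [AddCommGroup G] [Module K G] {m : ℕ}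
    (B : AlternatingMap K G G (Fin (m + 1))) : Prop :=
  ∀ x : Fin (2 * m + 1) → G,
    ∑ σ : Equiv.Perm (Fin (2 * m + 1)), (Equiv.Perm.sign σ : ℤ) •
      B (Fin.cons (B fun j => x (σ (Fin.castLE (by omega) j)))
        (fun j : Fin m => x (σ ⟨m + 1 + j.1, by have := j.isLt; omega⟩))) = 0

/-- if G = V₀ ⊕ V₁ and `[V₁, V₀, ..., V₀] ⊆ V₁`, then the projected
bracket `π₀ ∘ [·,...,·]` on V₀ is an alternating (m+1)-bracket satisfying the
generalized Jacobi identity (the reduced multialgebra). -/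
theorem reduced_multialgebra {K G : Type*} [Field K] [AddCommGroup G] [Module K G]
    (m : ℕ) (hn : Even (m + 1))
    (B : AlternatingMap K G G (Fin (m + 1))) (hB : GJI B)
    (V0 V1 : Submodule K G) (hcompl : IsCompl V0 V1)
    (hred : ∀ x : Fin (m + 1) → G, x 0 ∈ V1 → (∀ k, k ≠ 0 → x k ∈ V0) → B x ∈ V1) :
    GJI (K := K) (G := V0)
      ((V0.linearProjOfIsCompl V1 hcompl).compAlternatingMap
        (B.compLinearMap V0.subtype)) := by
  intro x
  set π := V0.linearProjOfIsCompl V1 hcompl with hπ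
  -- key pointwise identity
  have key : ∀ σ : Equiv.Perm (Fin (2 * m + 1)),
      (π.compAlternatingMap (B.compLinearMap V0.subtype))
        (Fin.cons ((π.compAlternatingMap (B.compLinearMap V0.subtype))
            fun j => x (σ (Fin.castLE (by omega) j)))
          (fun j : Fin m => x (σ ⟨m + 1 + j.1, by have := j.isLt; omega⟩)))
      = π (B (Fin.cons (B fun j => (x (σ (Fin.castLE (by omega) j)) : G))
          (fun j : Fin m => (x (σ ⟨m + 1 + j.1, by have := j.isLt; omega⟩) : G)))) := by
    intro σ
    set a : G := B fun j => (x (σ (Fin.castLE (by omega) j)) : G) with ha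
    set y : Fin m → G := fun j => (x (σ ⟨m + 1 + j.1, by have := j.isLt; omega⟩) : G) with hy
    have hcoe : (fun i => ((Fin.cons (π a)
          (fun j : Fin m => x (σ ⟨m + 1 + j.1, by have := j.isLt; omega⟩)) : Fin (m+1) → V0) i : G))
        = Fin.cons ((π a : G)) y := by
      funext i
      refine Fin.cases ?_ ?_ i
      · simp
      · intro j; simp [hy]
    simp only [LinearMap.compAlternatingMap_apply, AlternatingMap.compLinearMap_apply,
      Submodule.subtype_apply]
    rw [show (B fun i => (x (σ (Fin.castLE (by omega) i)) : G)) = a from rfl, hcoe]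
    -- B (cons a y) = B (cons ↑(π a) y) + B (cons (a - ↑(π a)) y)
    have e : ∀ v : G, Function.update (Fin.cons a y : Fin (m+1) → G) 0 v = Fin.cons v y := by
      intro v; funext i
      refine Fin.cases ?_ ?_ i
      · simp
      · intro j; simp [Fin.succ_ne_zero]
    have hsplit : B (Fin.cons (π a : G) y) = B (Fin.cons a y) - B (Fin.cons (a - (π a : G)) y) := by
      have h := B.toMultilinearMap.map_update_add (Fin.cons a y) 0 ((π a : G)) (a - (π a : G))
      rw [e, e] at h
      have h' : ((π a : G) + (a - (π a : G))) = a := by abel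
      rw [h', e] at h
      exact eq_sub_of_add_eq h.symm
    have hmem : B (Fin.cons (a - (π a : G)) y) ∈ V1 := by
      apply hred
      · simp only [Fin.cons_zero]
        rw [← Submodule.linearProjOfIsCompl_apply_eq_zero_iff hcompl, map_sub,
          Submodule.linearProjOfIsCompl_apply_left hcompl (π a)]
        exact sub_self _
      · intro k hk
        rcases Fin.eq_zero_or_eq_succ k with h | ⟨j, rfl⟩
        · exact absurd h hk
        · simp only [Fin.cons_succ, hy]
          exact (x _).2
    rw [hsplit, map_sub, show π (B (Fin.cons (a - (π a : G)) y)) = 0 from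
      Submodule.projectionOnto_apply_of_mem_right hcompl hmem, sub_zero]
  calc ∑ σ : Equiv.Perm (Fin (2 * m + 1)), (Equiv.Perm.sign σ : ℤ) •
      (π.compAlternatingMap (B.compLinearMap V0.subtype))
        (Fin.cons ((π.compAlternatingMap (B.compLinearMap V0.subtype))
            fun j => x (σ (Fin.castLE (by omega) j)))
          (fun j : Fin m => x (σ ⟨m + 1 + j.1, by have := j.isLt; omega⟩)))
      = ∑ σ : Equiv.Perm (Fin (2 * m + 1)), (Equiv.Perm.sign σ : ℤ) •
        π (B (Fin.cons (B fun j => (x (σ (Fin.castLE (by omega) j)) : G))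
          (fun j : Fin m => (x (σ ⟨m + 1 + j.1, by have := j.isLt; omega⟩) : G)))) := by
        exact Finset.sum_congr rfl fun σ _ => by rw [key σ]
    _ = π (∑ σ : Equiv.Perm (Fin (2 * m + 1)), (Equiv.Perm.sign σ : ℤ) •
        B (Fin.cons (B fun j => (x (σ (Fin.castLE (by omega) j)) : G))
          (fun j : Fin m => (x (σ ⟨m + 1 + j.1, by have := j.isLt; omega⟩) : G)))) := by
        rw [map_sum]; exact Finset.sum_congr rfl fun σ _ => (map_zsmul π _ _).symm
    _ = 0 := by rw [hB fun i => (x i : G), map_zero]
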